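/- Let α be irrational with bounded partial quotients (q_{n+1} ≤ C q_n), x ≠ y ∈ 𝕋, s the unique index with 1/q_{s+1} ≤ ‖x − y‖ < 1/q_s, and β ∈ 𝕋. Then the number of integers t with 0 ≤ t ≤ q_{s+1} − 1 such that β − tα lies in the interval [x, y) is at most 2C + 1. -/

import Mathlib

open scoped Classical

/-- Distance from a real number to the nearest integer (metric on `ℝ/ℤ`). -/
noncomputable def distToInt (x : ℝ) : ℝ := |x - round x|

lemma distToInt_le_abs (z : ℝ) : distToInt z ≤ |z| := by
  unfold distToInt
  rcases le_or_gt (1/2 : ℝ) |z| with h | h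
  · exact le_trans (abs_sub_round z) h
  · have hz : round z = 0 := by
      rw [round_eq_zero_iff]
      constructor
      · linarith [neg_abs_le z]
      · linarith [le_abs_self z]
    simp [hz]

lemma distToInt_add_int (z : ℝ) (n : ℤ) : distToInt (z + n) = distToInt z := by
  unfold distToInt
  rw [round_add_intCast]
  push_cast
  ring_nf

/-- Let `α` have bounded partial quotients with constant `C` (`q_{s+1} ≤ C·q_s`) and
`x ≠ y` with `1/q_{s+1} ≤ ‖x - y‖ < 1/q_s`.  Then for any `β`, the number of
`t ∈ {0, …, q_{s+1} - 1}` with `β - tα` in the arc `[x, y)` (of length `‖x - y‖`) is at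
most `2C + 1`. -/
theorem stmt19 (α : ℝ) (hα : Irrational α) (C : ℕ) (hC : 0 < C)
    (qs qs1 : ℕ) (hqs : 0 < qs) (hq : qs1 ≤ C * qs)
    (hspace : ∀ j : ℤ, j ≠ 0 → |j| < (qs1 : ℤ) →
      1 / (2 * (C : ℝ) * (qs : ℝ)) ≤ distToInt ((j : ℝ) * α))
    (x y β : ℝ)
    (hlow : 1 / (qs1 : ℝ) ≤ distToInt (x - y)) (hup : distToInt (x - y) < 1 / (qs : ℝ)) :
    ((Finset.range qs1).filter
        (fun t => Int.fract (β - (t : ℝ) * α - x) < distToInt (x - y))).card ≤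
      2 * C + 1 := by
  set L := distToInt (x - y) with hLdef
  set δ : ℝ := 1 / (2 * (C : ℝ) * (qs : ℝ)) with hδdef
  have hCpos : (0:ℝ) < C := by exact_mod_cast hC
  have hqspos : (0:ℝ) < qs := by exact_mod_cast hqs
  have hδpos : 0 < δ := by positivity
  have h2Cδ : 2 * (C:ℝ) * δ = 1 / qs := by
    rw [hδdef]
    field_simp
  set f : ℕ → ℝ := fun t => Int.fract (β - (t : ℝ) * α - x) with hfdef
  set S := (Finset.range qs1).filter (fun t => f t < L) with hSdef
  set g : ℕ → ℤ := fun t => ⌊f t / δ⌋ with hgdef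
  -- injectivity of g on S
  have hinj : Set.InjOn g S := by
    intro t ht t' ht' hgt
    by_contra hne
    simp only [hSdef, Finset.coe_filter, Set.mem_setOf_eq, Finset.mem_range] at ht ht'
    set j : ℤ := (t' : ℤ) - (t : ℤ) with hjdef
    have hj0 : j ≠ 0 := by
      intro h
      apply hne
      omega
    have hjlt : |j| < (qs1 : ℤ) := by
      rw [abs_lt]
      constructor <;> omega
    have hsp := hspace j hj0 hjlt
    -- f t - f t' = j*α + integer
    have key : distToInt (f t - f t') = distToInt ((j:ℝ) * α) := by
      have : f t - f t' = (j:ℝ) * α + (⌊β - (t' : ℝ) * α - x⌋ - ⌊β - (t : ℝ) * α - x⌋ : ℤ) := by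
        simp only [hfdef, Int.fract, hjdef]
        push_cast
        ring
      rw [this, distToInt_add_int]
    have h1 : δ ≤ |f t - f t'| := by
      calc δ ≤ distToInt ((j:ℝ) * α) := hsp
        _ = distToInt (f t - f t') := key.symm
        _ ≤ |f t - f t'| := distToInt_le_abs _
    -- but ⌊f t / δ⌋ = ⌊f t' / δ⌋ forces |f t - f t'| < δ
    have h2 : |f t / δ - f t' / δ| < 1 := by
      have e1 := Int.floor_le (f t / δ)
      have e2 := Int.lt_floor_add_one (f t / δ)
      have e3 := Int.floor_le (f t' / δ)
      have e4 := Int.lt_floor_add_one (f t' / δ)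
      have hgt0 : ⌊f t / δ⌋ = ⌊f t' / δ⌋ := hgt
      have hgt' : (⌊f t / δ⌋ : ℝ) = (⌊f t' / δ⌋ : ℝ) := by exact_mod_cast hgt0
      rw [abs_lt]
      constructor <;> linarith
    have h3 : |f t - f t'| < δ := by
      have : f t / δ - f t' / δ = (f t - f t') / δ := by ring
      rw [this, abs_div, abs_of_pos hδpos, div_lt_one hδpos] at h2
      exact h2
    linarith
  -- image of g on S lies in Ico 0 (2C)
  have himg : S.image g ⊆ Finset.Ico (0 : ℤ) (2 * C) := by
    intro z hz
    simp only [Finset.mem_image] at hz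
    obtain ⟨t, ht, rfl⟩ := hz
    simp only [hSdef, Finset.mem_filter, Finset.mem_range] at ht
    have hf0 : 0 ≤ f t := Int.fract_nonneg _
    have hflt : f t < 2 * (C:ℝ) * δ := by
      rw [h2Cδ]
      exact lt_trans ht.2 hup
    simp only [Finset.mem_Ico]
    constructor
    · exact Int.floor_nonneg.mpr (by positivity)
    · rw [Int.floor_lt]
      push_cast
      rw [div_lt_iff₀ hδpos]
      linarith
  have hcard : S.card = (S.image g).card := (Finset.card_image_of_injOn hinj).symm
  have hfin : S.card ≤ 2 * C + 1 := by
    calc S.card = (S.image g).card := hcard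
      _ ≤ (Finset.Ico (0 : ℤ) (2 * C)).card := Finset.card_le_card himg
      _ = 2 * C := by simp; omega
      _ ≤ 2 * C + 1 := Nat.le_succ _
  have hset : (do let a ← Finset.range qs1; pure ((a:ℝ)) : Finset ℝ)
      = (Finset.range qs1).image (fun (n : ℕ) => (n:ℝ)) := by
    ext z; simp
  calc ((do let a ← Finset.range qs1; pure ((a:ℝ)) : Finset ℝ).filter
          (fun t => Int.fract (β - t * α - x) < L)).card
      = (((Finset.range qs1).image (fun (n : ℕ) => (n:ℝ))).filter
          (fun t => Int.fract (β - t * α - x) < L)).card := by rw [hset]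
    _ = (((Finset.range qs1).filter (fun (n : ℕ) => Int.fract ((β : ℝ) - n * α - x) < L)).image
          (fun (n : ℕ) => (n:ℝ))).card := by rw [Finset.filter_image]
    _ ≤ S.card := Finset.card_image_le
    _ ≤ 2 * C + 1 := hfin
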